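/- Let q be a prime power. The evaluation vectors over the affine F_{q^2}-points of the Hermitian curve x^q + x = y^{q+1} of the monomials x^a y^b, for 0 ≤ a ≤ q−1 and 0 ≤ b ≤ q^2−1, are linearly independent over F_{q^2}. Equivalently, a nonzero F_{q^2}-linear combination of such monomials cannot vanish on all q^3 affine points of the curve. -/

import Mathlib

open Polynomial Finset

/-- Root sets of nonzero polynomials over a field are small. -/
lemma aux_card_filter_roots_le {F : Type*} [Field F] [Fintype F] [DecidableEq F]
    (f : F[X]) (hf : f ≠ 0) :
    (Finset.univ.filter (fun x : F => f.eval x = 0)).card ≤ f.natDegree := by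
  have hsub : (Finset.univ.filter (fun x : F => f.eval x = 0)) ⊆ f.roots.toFinset := by
    intro x hx
    simp only [Finset.mem_filter, Finset.mem_univ, true_and] at hx
    simpa [Multiset.mem_toFinset, Polynomial.mem_roots hf] using hx
  calc (Finset.univ.filter (fun x : F => f.eval x = 0)).card
      ≤ f.roots.toFinset.card := Finset.card_le_card hsub
    _ ≤ Multiset.card f.roots := Multiset.toFinset_card_le _
    _ ≤ f.natDegree := Polynomial.card_roots' f

/-- The evaluation vectors on the affine `F_{q^2}`-points of the Hermitian curve
`x^q + x = y^(q+1)` of the monomials `x^a y^b`, `0 ≤ a ≤ q-1`, `0 ≤ b ≤ q^2-1`, are linearly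
independent over `F_{q^2}`. -/
theorem stmt_18 {q : ℕ} (hq : IsPrimePow q) {F : Type*} [Field F] [Fintype F]
    (hF : Fintype.card F = q ^ 2) :
    LinearIndependent F
      (fun ab : Fin q × Fin (q ^ 2) =>
        (fun p : {p : F × F // p.1 ^ q + p.1 = p.2 ^ (q + 1)} =>
          p.1.1 ^ (ab.1 : ℕ) * p.1.2 ^ (ab.2 : ℕ))) := by
  classical
  obtain ⟨p, k, hp, hk, hpk⟩ := hq
  have hp' : p.Prime := hp.nat_prime
  haveI : Fact p.Prime := ⟨hp'⟩
  have hq2 : 2 ≤ q := by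
    rw [← hpk]
    calc 2 ≤ p := hp'.two_le
      _ = p ^ 1 := (pow_one p).symm
      _ ≤ p ^ k := Nat.pow_le_pow_right hp'.pos hk
  have hq0 : 0 < q := by omega
  -- characteristic
  have hpF : (p : F) = 0 := by
    have h1 : ((Fintype.card F : ℕ) : F) = 0 := FiniteField.cast_card_eq_zero F
    rw [hF, ← hpk] at h1
    have h2 : ((p : F)) ^ (k * 2) = 0 := by push_cast at h1; rw [← pow_mul] at h1; exact h1
    have hk2 : k * 2 ≠ 0 := by omega
    exact pow_eq_zero_iff hk2 |>.mp h2
  haveI hchar : CharP F p := (CharP.charP_iff_prime_eq_zero hp').mpr hpF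
  -- Frobenius facts
  have hadd : ∀ a b : F, (a + b) ^ q = a ^ q + b ^ q := by
    intro a b; rw [← hpk]; exact add_pow_char_pow a b p k
  have hsub : ∀ a b : F, (a - b) ^ q = a ^ q - b ^ q := by
    intro a b; rw [← hpk]; exact sub_pow_char_pow a b k
  have hq2pow : ∀ x : F, x ^ q ^ 2 = x := by
    intro x; rw [← hF]; exact FiniteField.pow_card x
  -- the fixed set T and kernel K
  set T : Finset F := Finset.univ.filter (fun z => z ^ q = z) with hT
  set K : Finset F := Finset.univ.filter (fun x => x ^ q + x = 0) with hK
  have hdeg1 : (X ^ q - X : F[X]).natDegree = q := by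
    compute_degree!
    all_goals try rw [if_neg (by omega : ¬(1:ℕ) = q)]
    all_goals first | omega | norm_num
  have hdeg2 : (X ^ q + X : F[X]).natDegree = q := by
    compute_degree!
    all_goals try rw [if_neg (by omega : ¬(1:ℕ) = q)]
    all_goals first | omega | norm_num
  have hne1 : (X ^ q - X : F[X]) ≠ 0 := by
    intro h0; rw [h0] at hdeg1; simp at hdeg1; omega
  have hne2 : (X ^ q + X : F[X]) ≠ 0 := by
    intro h0; rw [h0] at hdeg2; simp at hdeg2; omega
  have hTcard : T.card ≤ q := by
    have h := aux_card_filter_roots_le (F := F) (X ^ q - X) hne1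
    rw [hdeg1] at h
    refine le_trans (le_of_eq ?_) h
    congr 1
    ext z
    simp [hT, sub_eq_zero]
  have hKcard : K.card ≤ q := by
    have h := aux_card_filter_roots_le (F := F) (X ^ q + X) hne2
    rw [hdeg2] at h
    refine le_trans (le_of_eq ?_) h
    congr 1
    ext z
    simp [hK]
  -- the fibers
  set S : F → Finset F := fun z => Finset.univ.filter (fun x => x ^ q + x = z) with hS
  have hSle : ∀ z, (S z).card ≤ q := by
    intro z
    rcases (S z).eq_empty_or_nonempty with h | ⟨x0, hx0⟩
    · simp [h]
    · have hx0' : x0 ^ q + x0 = z := by simpa [hS] using hx0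
      refine le_trans (Finset.card_le_card_of_injOn (fun x => x - x0) ?_ ?_) hKcard
      · intro x hx
        have hx' : x ^ q + x = z := by simpa [hS] using hx
        simp only [hK, Finset.mem_coe, Finset.mem_filter, Finset.mem_univ, true_and]
        rw [hsub]
        have : x ^ q - x0 ^ q + (x - x0) = (x ^ q + x) - (x0 ^ q + x0) := by ring
        rw [this, hx', hx0', sub_self]
      · intro a _ b _ hab
        simpa using sub_left_injective hab
  have hmemT : ∀ x : F, x ^ q + x ∈ T := by
    intro x
    simp only [hT, Finset.mem_filter, Finset.mem_univ, true_and]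
    rw [hadd, ← pow_mul, ← sq, hq2pow]
    ring
  have hunion : T.biUnion S = Finset.univ := by
    ext x
    simp only [Finset.mem_biUnion, Finset.mem_univ, iff_true]
    exact ⟨x ^ q + x, hmemT x, by simp [hS]⟩
  have hdisj : ∀ z1 ∈ T, ∀ z2 ∈ T, z1 ≠ z2 → Disjoint (S z1) (S z2) := by
    intro z1 _ z2 _ hne
    rw [Finset.disjoint_left]
    intro x h1 h2
    simp only [hS, Finset.mem_filter, Finset.mem_univ, true_and] at h1 h2
    exact hne (h1 ▸ h2 ▸ rfl)
  have hsum : ∑ z ∈ T, (S z).card = q ^ 2 := by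
    rw [← Finset.card_biUnion hdisj, hunion, Finset.card_univ, hF]
  -- each fiber over T has exactly q elements
  have hfib : ∀ z ∈ T, (S z).card = q := by
    intro z hz
    by_contra hne
    have hlt : (S z).card < q := lt_of_le_of_ne (hSle z) hne
    have : ∑ w ∈ T, (S w).card < ∑ w ∈ T, q :=
      Finset.sum_lt_sum (fun w _ => hSle w) ⟨z, hz, hlt⟩
    rw [hsum, Finset.sum_const, smul_eq_mul] at this
    have : q ^ 2 < q * q := lt_of_lt_of_le this (Nat.mul_le_mul_right q hTcard)
    rw [sq] at this
    omega
  -- linear independence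
  rw [Fintype.linearIndependent_iff]
  intro g hg ab
  have hpt : ∀ (P : {p : F × F // p.1 ^ q + p.1 = p.2 ^ (q + 1)}),
      ∑ a : Fin q, ∑ b : Fin (q ^ 2), g (a, b) * (P.1.1 ^ (a : ℕ) * P.1.2 ^ (b : ℕ)) = 0 := by
    intro P
    have := congrFun hg P
    simpa [Finset.sum_apply, Fintype.sum_prod_type] using this
  -- step 1: for each y, coefficients of the x-polynomial vanish
  have hstep1 : ∀ (y : F) (a : Fin q), ∑ b : Fin (q ^ 2), g (a, b) * y ^ (b : ℕ) = 0 := by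
    intro y a
    set Py : F[X] := ∑ a : Fin q,
      Polynomial.monomial (a : ℕ) (∑ b : Fin (q ^ 2), g (a, b) * y ^ (b : ℕ)) with hPy
    have hyT : y ^ (q + 1) ∈ T := by
      simp only [hT, Finset.mem_filter, Finset.mem_univ, true_and]
      rw [← pow_mul]
      have : (q + 1) * q = q ^ 2 + q := by ring
      rw [this, pow_add, hq2pow]
      rw [pow_add, pow_one, mul_comm]
    have heval : ∀ x ∈ S (y ^ (q + 1)), Py.eval x = 0 := by
      intro x hx
      have hx' : x ^ q + x = y ^ (q + 1) := by simpa [hS] using hx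
      have := hpt ⟨(x, y), hx'⟩
      rw [hPy]
      simp only [Polynomial.eval_finset_sum, Polynomial.eval_monomial]
      rw [← this]
      refine Finset.sum_congr rfl fun a' _ => ?_
      rw [Finset.sum_mul]
      refine Finset.sum_congr rfl fun b' _ => ?_
      ring
    have hdeg : Py.natDegree < q := by
      have : Py.natDegree ≤ q - 1 := by
        apply Polynomial.natDegree_sum_le_of_forall_le
        intro a' _
        refine le_trans (Polynomial.natDegree_monomial_le _) ?_
        omega
      omega
    have hPy0 : Py = 0 := by
      apply Polynomial.eq_zero_of_natDegree_lt_card_of_eval_eq_zero' Py (S (y ^ (q + 1))) heval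
      rw [hfib _ hyT]
      exact hdeg
    have := congrArg (fun f => Polynomial.coeff f (a : ℕ)) hPy0
    simp only [hPy, Polynomial.finset_sum_coeff, Polynomial.coeff_monomial,
      Polynomial.coeff_zero] at this
    rw [Finset.sum_eq_single a] at this
    · simpa using this
    · intro b' _ hne
      rw [if_neg]
      exact fun h => hne (Fin.ext h)
    · intro h
      exact absurd (Finset.mem_univ a) h
  -- step 2: the y-polynomial vanishes identically
  obtain ⟨a, b⟩ := ab
  set Qa : F[X] := ∑ b : Fin (q ^ 2), Polynomial.monomial (b : ℕ) (g (a, b)) with hQa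
  have hevalQ : ∀ y : F, Qa.eval y = 0 := by
    intro y
    rw [hQa]
    simp only [Polynomial.eval_finset_sum, Polynomial.eval_monomial]
    exact hstep1 y a
  have hdegQ : Qa.natDegree < q ^ 2 := by
    have : Qa.natDegree ≤ q ^ 2 - 1 := by
      apply Polynomial.natDegree_sum_le_of_forall_le
      intro b' _
      refine le_trans (Polynomial.natDegree_monomial_le _) ?_
      have := b'.isLt
      omega
    have : 0 < q ^ 2 := by positivity
    omega
  have hQ0 : Qa = 0 := by
    apply Polynomial.eq_zero_of_natDegree_lt_card_of_eval_eq_zero Qa Function.injective_id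
      (fun y => hevalQ y)
    rw [hF]
    exact hdegQ
  have := congrArg (fun f => Polynomial.coeff f (b : ℕ)) hQ0
  simp only [hQa, Polynomial.finset_sum_coeff, Polynomial.coeff_monomial,
    Polynomial.coeff_zero] at this
  rw [Finset.sum_eq_single b] at this
  · simpa using this
  · intro b' _ hne
    rw [if_neg]
    exact fun h => hne (Fin.ext h)
  · intro h
    exact absurd (Finset.mem_univ b) h
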